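/- There exists a universal constant C such that the following holds for S = 𝖱 and for S = 𝖱⁺. For every p ≥ 1 and every depth-2p alternating min-plus formula F over S of size s (with s ≥ 1 leaves), there exists a (weakest) width-(2p+1) ABP over S of length at most C · p · s that computes the same function S^V → S as F. -/

import Mathlib

open MvPolynomial

/-- `𝖱`: the min-plus semiring on `ℝ ∪ {∞}`. -/
abbrev TR : Type := Tropical (WithTop ℝ)

/-- `𝖱⁺`: the min-plus semiring on `ℝ≥0 ∪ {∞}`. -/
abbrev TRP : Type := Tropical (WithTop NNReal)

/-- Alternating min-plus formulas of depth `i` over the semiring `S` in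
variables `V`: a depth-0 object is a leaf (a variable or a constant), and a
depth-`(i+1)` object is a gate, given by the list of its depth-`i` children
(every gate has fan-out 1 since the children lists are disjoint trees). -/
def Level (V S : Type) : ℕ → Type
  | 0 => V ⊕ S
  | i + 1 => List (Level V S i)

/-- Evaluation of an alternating formula: leaves evaluate to the assigned value
or the constant; gates at odd levels are `⊗` gates (tropical product, i.e. real
addition, of their children) and gates at even levels are `⊕` gates (tropical
sum, i.e. minimum, of their children). -/
def evalLevel {V S : Type} [CommSemiring S] (a : V → S) : (i : ℕ) → Level V S i → S
  | 0, x => Sum.elim a id x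
  | i + 1, ts =>
      if (i + 1) % 2 = 1 then
        (List.map (evalLevel a i) (show List (Level V S i) from ts)).prod
      else
        (List.map (evalLevel a i) (show List (Level V S i) from ts)).sum

/-- The size of an alternating formula is its number of leaves. -/
def sizeLevel {V S : Type} : (i : ℕ) → Level V S i → ℕ
  | 0, _ => 1
  | i + 1, ts => (List.map (sizeLevel i) (show List (Level V S i) from ts)).sum

/-- In a (weakest) ABP every matrix entry is a single variable or a constant. -/
def IsABP {S V : Type} [CommSemiring S] {w L : ℕ}
    (M : Fin L → Matrix (Fin w) (Fin w) (MvPolynomial V S)) : Prop :=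
  ∀ l i j, (∃ v, M l i j = X v) ∨ (∃ c, M l i j = C c)

/-- The function computed by a (weakest) width-`w` ABP: the evaluation at an
assignment of the `(1,1)`-entry of the min-plus matrix product `M₁ ⋯ M_L`. -/
noncomputable def ABPeval {S V : Type} [CommSemiring S] {w L : ℕ} [NeZero w]
    (M : Fin L → Matrix (Fin w) (Fin w) (MvPolynomial V S)) (a : V → S) : S :=
  eval a ((List.ofFn M).prod 0 0)

namespace St8

variable {T : Type} [CommSemiring T] {w : ℕ}

/-- partial identity on indices `< k` -/
def diagm (w : ℕ) (T : Type) [CommSemiring T] (k : ℕ) : Matrix (Fin w) (Fin w) T :=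
  Matrix.of fun (j l : Fin w) => if (j : ℕ) = (l : ℕ) ∧ (j : ℕ) < k then 1 else 0

/-- single entry at `(a, b)` -/
def sbm (w : ℕ) (T : Type) [CommSemiring T] (a b : ℕ) (x : T) : Matrix (Fin w) (Fin w) T :=
  Matrix.of fun (j l : Fin w) => if (j : ℕ) = a ∧ (l : ℕ) = b then x else 0

lemma diagm_mul (k : ℕ) (M : Matrix (Fin w) (Fin w) T) :
    diagm w T k * M = Matrix.of fun (j l : Fin w) => if (j : ℕ) < k then M j l else 0 := by
  ext j l
  rw [Matrix.mul_apply, Finset.sum_eq_single j]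
  · by_cases h : (j : ℕ) < k <;> simp [diagm, h]
  · intro b _ hb
    have : (j : ℕ) ≠ (b : ℕ) := fun h => hb (Fin.ext h.symm)
    simp [diagm, this]
  · simp

lemma mul_diagm (k : ℕ) (M : Matrix (Fin w) (Fin w) T) :
    M * diagm w T k = Matrix.of fun (j l : Fin w) => if (l : ℕ) < k then M j l else 0 := by
  ext j l
  rw [Matrix.mul_apply, Finset.sum_eq_single l]
  · by_cases h : (l : ℕ) < k <;> simp [diagm, h]
  · intro b _ hb
    have : (b : ℕ) ≠ (l : ℕ) := fun h => hb (Fin.ext h)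
    simp [diagm, this]
  · simp

lemma sbm_mul (a b : ℕ) (hb : b < w) (x : T) (M : Matrix (Fin w) (Fin w) T) :
    sbm w T a b x * M = Matrix.of fun (j l : Fin w) => if (j : ℕ) = a then x * M ⟨b, hb⟩ l else 0 := by
  ext j l
  rw [Matrix.mul_apply, Finset.sum_eq_single (⟨b, hb⟩ : Fin w)]
  · by_cases h : (j : ℕ) = a <;> simp [sbm, h]
  · intro m _ hm
    have : (m : ℕ) ≠ b := fun h => hm (Fin.ext h)
    simp [sbm, this]
  · simp

lemma mul_sbm (a b : ℕ) (ha : a < w) (x : T) (M : Matrix (Fin w) (Fin w) T) :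
    M * sbm w T a b x = Matrix.of fun (j l : Fin w) => if (l : ℕ) = b then M j ⟨a, ha⟩ * x else 0 := by
  ext j l
  rw [Matrix.mul_apply, Finset.sum_eq_single (⟨a, ha⟩ : Fin w)]
  · by_cases h : (l : ℕ) = b <;> simp [sbm, h]
  · intro m _ hm
    have : (m : ℕ) ≠ a := fun h => hm (Fin.ext h)
    simp [sbm, this]
  · simp

lemma diagm_mul_diagm (k k' : ℕ) :
    diagm w T k * diagm w T k' = diagm w T (min k k') := by
  rw [diagm_mul]
  ext j l
  simp only [Matrix.of_apply, diagm]
  split_ifs <;> first | rfl | omega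

lemma diagm_mul_sbm (k a b : ℕ) (x : T) :
    diagm w T k * sbm w T a b x = if a < k then sbm w T a b x else 0 := by
  rw [diagm_mul]
  by_cases hak : a < k <;>
    [simp only [if_pos hak]; simp only [if_neg hak]] <;>
    · ext j l
      simp only [Matrix.of_apply, sbm, Matrix.zero_apply]
      split_ifs <;> first | rfl | omega

lemma sbm_mul_diagm (k a b : ℕ) (hb : b < w) (x : T) :
    sbm w T a b x * diagm w T k = if b < k then sbm w T a b x else 0 := by
  rw [sbm_mul a b hb]
  by_cases hbk : b < k <;>
    [simp only [if_pos hbk]; simp only [if_neg hbk]] <;>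
    · ext j l
      simp only [Matrix.of_apply, diagm, sbm, Matrix.zero_apply]
      split_ifs <;> first | rfl | omega | simp

lemma sbm_mul_sbm (a b a' b' : ℕ) (hb : b < w) (x y : T) :
    sbm w T a b x * sbm w T a' b' y = if b = a' then sbm w T a b' (x * y) else 0 := by
  rw [sbm_mul a b hb]
  by_cases hba : b = a' <;>
    [simp only [if_pos hba]; simp only [if_neg hba]] <;>
    · ext j l
      simp only [Matrix.of_apply, sbm, Matrix.zero_apply]
      split_ifs <;> first | rfl | omega | simp

lemma sbm_add (a b : ℕ) (x y : T) :
    sbm w T a b x + sbm w T a b y = sbm w T a b (x + y) := by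
  ext j l
  simp only [Matrix.add_apply, sbm, Matrix.of_apply]
  split_ifs <;> simp

lemma sbm_zero (a b : ℕ) : sbm w T a b (0 : T) = 0 := by
  ext j l
  simp only [sbm, Matrix.of_apply, Matrix.zero_apply]
  split_ifs <;> rfl

/-! ### Gadget matrices -/

/-- `fm q x` : identity below `q`, value `x` at `(q,q)`, zero elsewhere. -/
def fm (w : ℕ) (T : Type) [CommSemiring T] (q : ℕ) (x : T) : Matrix (Fin w) (Fin w) T :=
  diagm w T q + sbm w T q q x

/-- "mid" matrix of an addition gadget. -/
def midm (w : ℕ) (T : Type) [CommSemiring T] (q : ℕ) (v : T) : Matrix (Fin w) (Fin w) T :=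
  diagm w T (q + 2) + sbm w T q (q + 1) v

/-- partial accumulation matrix of an addition gadget. -/
def wmidm (w : ℕ) (T : Type) [CommSemiring T] (q : ℕ) (v : T) : Matrix (Fin w) (Fin w) T :=
  diagm w T (q + 1) + sbm w T q (q + 1) v

/-- entry matrix of an addition gadget. -/
def Emat (w : ℕ) (T : Type) [CommSemiring T] (q : ℕ) : Matrix (Fin w) (Fin w) T :=
  diagm w T (q + 2) + sbm w T q (q + 2) 1

/-- exit matrix of an addition gadget. -/
def Fmat (w : ℕ) (T : Type) [CommSemiring T] (q : ℕ) : Matrix (Fin w) (Fin w) T :=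
  diagm w T (q + 2) + sbm w T (q + 2) (q + 1) 1

/-- closing matrix of an addition gadget. -/
def Zmat (w : ℕ) (T : Type) [CommSemiring T] (q : ℕ) : Matrix (Fin w) (Fin w) T :=
  diagm w T q + sbm w T (q + 1) q 1

/-- opening matrix of an addition gadget. -/
def Wmat (w : ℕ) (T : Type) [CommSemiring T] (q : ℕ) : Matrix (Fin w) (Fin w) T :=
  wmidm w T q 0

lemma fm_mul (q : ℕ) (hq : q < w) (x y : T) :
    fm w T q x * fm w T q y = fm w T q (x * y) := by
  unfold fm
  rw [add_mul, mul_add, mul_add, diagm_mul_diagm, diagm_mul_sbm,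
    sbm_mul_diagm q q q hq, sbm_mul_sbm q q q q hq]
  simp [min_self]

lemma fm_list_prod (q : ℕ) (hq : q < w) (x : T) :
    ∀ vs : List T, fm w T q x * (vs.map (fm w T q)).prod = fm w T q (x * vs.prod)
  | [] => by simp
  | v :: vs => by
    rw [List.map_cons, List.prod_cons, ← mul_assoc, fm_mul q hq,
      fm_list_prod q hq (x * v) vs, List.prod_cons, mul_assoc]

lemma wmid_mul_mid (q : ℕ) (hq : q + 1 < w) (σ v : T) :
    wmidm w T q σ * midm w T q v = wmidm w T q (σ + v) := by
  unfold wmidm midm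
  rw [add_mul, mul_add, mul_add, diagm_mul_diagm, diagm_mul_sbm,
    sbm_mul_diagm (q+2) q (q+1) hq, sbm_mul_sbm q (q+1) q (q+1) hq]
  have h1 : min (q+1) (q+2) = q + 1 := by omega
  have h2 : q < q + 1 := by omega
  have h3 : q + 1 < q + 2 := by omega
  have h4 : ¬ (q + 1 = q) := by omega
  rw [h1, if_pos h2, if_pos h3, if_neg h4, add_zero, add_assoc, sbm_add, add_comm v σ]

lemma wmid_list_prod (q : ℕ) (hq : q + 1 < w) (σ : T) :
    ∀ vs : List T, wmidm w T q σ * (vs.map (midm w T q)).prod = wmidm w T q (σ + vs.sum)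
  | [] => by simp
  | v :: vs => by
    rw [List.map_cons, List.prod_cons, ← mul_assoc, wmid_mul_mid q hq,
      wmid_list_prod q hq (σ + v) vs, List.sum_cons, add_assoc]

lemma wmid_mul_Z (q : ℕ) (hq : q + 1 < w) (σ : T) :
    wmidm w T q σ * Zmat w T q = fm w T q σ := by
  unfold wmidm Zmat fm
  rw [add_mul, mul_add, mul_add, diagm_mul_diagm, diagm_mul_sbm,
    sbm_mul_diagm q q (q+1) hq, sbm_mul_sbm q (q+1) (q+1) q hq]
  have h1 : min (q+1) q = q := by omega
  have h2 : ¬ (q + 1 < q + 1) := by omega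
  have h3 : ¬ (q + 1 < q) := by omega
  rw [h1, if_neg h2, if_neg h3, if_pos rfl, mul_one, add_zero, zero_add]

lemma E_fm_F (q : ℕ) (hq : q + 2 < w) (v : T) :
    Emat w T q * fm w T (q + 2) v * Fmat w T q = midm w T q v := by
  have hEf : Emat w T q * fm w T (q + 2) v
      = diagm w T (q + 2) + sbm w T q (q + 2) v := by
    unfold Emat fm
    rw [add_mul, mul_add, mul_add, diagm_mul_diagm, diagm_mul_sbm,
      sbm_mul_diagm (q+2) q (q+2) hq, sbm_mul_sbm q (q+2) (q+2) (q+2) hq]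
    rw [min_self, if_neg (lt_irrefl (q+2)), if_neg (lt_irrefl (q+2)), if_pos rfl,
      one_mul, add_zero, zero_add]
  rw [hEf]
  unfold Fmat midm
  rw [add_mul, mul_add, mul_add, diagm_mul_diagm, diagm_mul_sbm,
    sbm_mul_diagm (q+2) q (q+2) hq, sbm_mul_sbm q (q+2) (q+2) (q+1) hq]
  rw [min_self, if_neg (lt_irrefl (q+2)), if_neg (lt_irrefl (q+2)), if_pos rfl,
    mul_one, add_zero, zero_add]

/-! ### List helpers -/

lemma prod_flatMap {α : Type} {M : Type} [Monoid M] (f : α → List M) :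
    ∀ l : List α, (l.flatMap f).prod = (l.map (fun a => (f a).prod)).prod
  | [] => by simp
  | a :: l => by
    rw [List.flatMap_cons, List.prod_append, List.map_cons, List.prod_cons,
      prod_flatMap f l]

lemma prod_filter_split {α : Type} {M : Type} [CommMonoid M] (p : α → Bool) (f : α → M) :
    ∀ l : List α,
      ((l.filter p).map f).prod * ((l.filter (fun a => !p a)).map f).prod
        = (l.map f).prod
  | [] => by simp
  | a :: l => by
    by_cases h : p a <;>
      simp only [List.filter_cons, h, Bool.not_true, Bool.not_false, if_pos, if_neg,
        Bool.false_eq_true, ite_true, ite_false, List.map_cons, List.prod_cons] <;>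
      rw [← prod_filter_split p f l] <;> [rw [mul_assoc]; rw [mul_left_comm]]

lemma sum_filter_split {α : Type} {M : Type} [AddCommMonoid M] (p : α → Bool) (f : α → M) :
    ∀ l : List α,
      ((l.filter p).map f).sum + ((l.filter (fun a => !p a)).map f).sum
        = (l.map f).sum
  | [] => by simp
  | a :: l => by
    by_cases h : p a <;>
      simp only [List.filter_cons, h, Bool.not_true, Bool.not_false, if_pos, if_neg,
        Bool.false_eq_true, ite_true, ite_false, List.map_cons, List.sum_cons] <;>
      rw [← sum_filter_split p f l] <;> abel

lemma sum_filter_le {α : Type} (p : α → Bool) (f : α → ℕ) :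
    ∀ l : List α, ((l.filter p).map f).sum ≤ (l.map f).sum
  | [] => by simp
  | a :: l => by
    by_cases h : p a <;>
      simp only [List.filter_cons, h, ite_true, ite_false, Bool.false_eq_true,
        List.map_cons, List.sum_cons] <;>
      have := sum_filter_le p f l <;> omega

lemma sum_le_mul_sum {α : Type} (K : ℕ) (f g : α → ℕ) :
    ∀ l : List α, (∀ a ∈ l, f a ≤ K * g a) →
      (l.map f).sum ≤ K * (l.map g).sum
  | [] => by simp
  | a :: l => by
    intro h
    simp only [List.map_cons, List.sum_cons, Nat.mul_add]
    have h1 := h a (by simp)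
    have h2 := sum_le_mul_sum K f g l (fun b hb => h b (by simp [hb]))
    omega

/-! ### Entry property -/

/-- "good entry": a single variable or a constant. -/
def OkP {V S : Type} [CommSemiring S] (f : MvPolynomial V S) : Prop :=
  (∃ v, f = MvPolynomial.X v) ∨ (∃ c, f = MvPolynomial.C c)

/-- "good matrix": all entries good. -/
def OkM {V S : Type} [CommSemiring S] {w : ℕ}
    (A : Matrix (Fin w) (Fin w) (MvPolynomial V S)) : Prop :=
  ∀ j l, OkP (A j l)

lemma okP_zero {V S : Type} [CommSemiring S] : OkP (0 : MvPolynomial V S) :=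
  Or.inr ⟨0, (map_zero _).symm⟩

lemma okP_one {V S : Type} [CommSemiring S] : OkP (1 : MvPolynomial V S) :=
  Or.inr ⟨1, (map_one _).symm⟩

lemma okM_ds {V S : Type} [CommSemiring S] {w : ℕ} (k a b : ℕ) (x : MvPolynomial V S)
    (hx : OkP x) (hd : ¬(a = b ∧ a < k)) :
    OkM (diagm w (MvPolynomial V S) k + sbm w (MvPolynomial V S) a b x) := by
  intro j l
  simp only [Matrix.add_apply, diagm, sbm, Matrix.of_apply]
  split_ifs with h1 h2 h2
  · exact absurd ⟨by omega, by omega⟩ hd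
  · rw [add_zero]; exact okP_one
  · rw [zero_add]; exact hx
  · rw [add_zero]; exact okP_zero

/-! ### The construction -/

variable {V S : Type} [CommSemiring S]

/-- The polynomial computed by an alternating formula. -/
noncomputable def polyLevel : (i : ℕ) → Level V S i → MvPolynomial V S
  | 0, x => Sum.elim MvPolynomial.X MvPolynomial.C x
  | i + 1, ts =>
      if (i + 1) % 2 = 1 then
        (List.map (polyLevel i) (show List (Level V S i) from ts)).prod
      else
        (List.map (polyLevel i) (show List (Level V S i) from ts)).sum

/-- The constant value of a formula without variables. -/
def cst (i : ℕ) (t : Level V S i) : S := evalLevel (fun _ => 1) i t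

lemma eval_polyLevel (a : V → S) : ∀ (i : ℕ) (G : Level V S i),
    MvPolynomial.eval a (polyLevel i G) = evalLevel a i G
  | 0, x => by cases x <;> simp [polyLevel, evalLevel]
  | i + 1, ts => by
    simp only [polyLevel, evalLevel]
    have hmap : List.map (MvPolynomial.eval a) (List.map (polyLevel i)
          (show List (Level V S i) from ts))
        = List.map (evalLevel a i) (show List (Level V S i) from ts) := by
      rw [List.map_map]
      exact List.map_congr_left fun t _ => eval_polyLevel a i t
    split_ifs
    · rw [map_list_prod, hmap]
    · rw [map_list_sum, hmap]

lemma polyLevel_const : ∀ (i : ℕ) (G : Level V S i), sizeLevel i G = 0 →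
    polyLevel i G = MvPolynomial.C (cst i G)
  | 0, x => by simp [sizeLevel]
  | i + 1, ts => by
    intro h
    have hall : ∀ t ∈ (show List (Level V S i) from ts), sizeLevel i t = 0 := by
      intro t ht
      have h0 : (List.map (sizeLevel i) (show List (Level V S i) from ts)).sum = 0 := h
      exact List.sum_eq_zero_iff.mp h0 _ (List.mem_map_of_mem ht)
    have hmap : List.map (polyLevel i) (show List (Level V S i) from ts)
        = List.map (fun t => (MvPolynomial.C : S →+* MvPolynomial V S) (cst i t))
            (show List (Level V S i) from ts) :=
      List.map_congr_left fun t ht => polyLevel_const i t (hall t ht)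
    simp only [polyLevel, cst, evalLevel, sizeLevel]
    split_ifs
    · rw [hmap, map_list_prod (MvPolynomial.C : S →+* MvPolynomial V S)]
      exact congrArg List.prod List.map_map.symm
    · rw [hmap, map_list_sum (MvPolynomial.C : S →+* MvPolynomial V S)]
      exact congrArg List.sum List.map_map.symm

/-- The ABP block of a formula. -/
noncomputable def blk (w : ℕ) : (i : ℕ) → ℕ → Level V S i →
    List (Matrix (Fin w) (Fin w) (MvPolynomial V S))
  | 0, q, x => [fm w (MvPolynomial V S) q (Sum.elim MvPolynomial.X MvPolynomial.C x)]
  | i + 1, q, ts =>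
      if (i + 1) % 2 = 1 then
        fm w (MvPolynomial V S) q (MvPolynomial.C
            ((((show List (Level V S i) from ts).filter
                (fun t => decide (sizeLevel i t = 0))).map (cst i)).prod))
          :: ((show List (Level V S i) from ts).filter
                (fun t => !decide (sizeLevel i t = 0))).flatMap (fun t => blk w i q t)
      else
        Wmat w (MvPolynomial V S) q
          :: (((show List (Level V S i) from ts).filter
                (fun t => !decide (sizeLevel i t = 0))).flatMap
                (fun t => Emat w (MvPolynomial V S) q ::
                  (blk w i (q + 2) t ++ [Fmat w (MvPolynomial V S) q]))
              ++ [Emat w (MvPolynomial V S) q,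
                  fm w (MvPolynomial V S) (q + 2) (MvPolynomial.C
                    ((((show List (Level V S i) from ts).filter
                        (fun t => decide (sizeLevel i t = 0))).map (cst i)).sum)),
                  Fmat w (MvPolynomial V S) q,
                  Zmat w (MvPolynomial V S) q])

lemma zs_prod (i : ℕ) (ts : List (Level V S i)) :
    ((ts.filter (fun t => decide (sizeLevel i t = 0))).map (polyLevel i)).prod
      = (MvPolynomial.C : S →+* MvPolynomial V S)
          (((ts.filter (fun t => decide (sizeLevel i t = 0))).map (cst i)).prod) := by
  rw [map_list_prod (MvPolynomial.C : S →+* MvPolynomial V S), List.map_map]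
  congr 1
  refine List.map_congr_left fun t ht => ?_
  have h0 : sizeLevel i t = 0 := by
    have := (List.mem_filter.mp ht).2
    simpa using this
  exact polyLevel_const i t h0

lemma zs_sum (i : ℕ) (ts : List (Level V S i)) :
    ((ts.filter (fun t => decide (sizeLevel i t = 0))).map (polyLevel i)).sum
      = (MvPolynomial.C : S →+* MvPolynomial V S)
          (((ts.filter (fun t => decide (sizeLevel i t = 0))).map (cst i)).sum) := by
  rw [map_list_sum (MvPolynomial.C : S →+* MvPolynomial V S), List.map_map]
  congr 1
  refine List.map_congr_left fun t ht => ?_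
  have h0 : sizeLevel i t = 0 := by
    have := (List.mem_filter.mp ht).2
    simpa using this
  exact polyLevel_const i t h0

lemma blk_prod (p : ℕ) : ∀ (i q : ℕ), q + i ≤ 2 * p + i % 2 → ∀ G : Level V S i,
    (blk (2*p+1) i q G).prod = fm (2*p+1) (MvPolynomial V S) q (polyLevel i G)
  | 0, q, hq, x => by simp [blk, polyLevel]
  | i + 1, q, hq, ts => by
    by_cases hpar : (i + 1) % 2 = 1
    · -- multiplication gate
      have hqw : q < 2*p+1 := by omega
      have hq' : q + i ≤ 2 * p + i % 2 := by omega
      simp only [blk, polyLevel, if_pos hpar]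
      rw [List.prod_cons, prod_flatMap]
      have hm1 : (((show List (Level V S i) from ts).filter
            (fun t => !decide (sizeLevel i t = 0))).map (fun t => (blk (2*p+1) i q t).prod))
          = (((show List (Level V S i) from ts).filter
            (fun t => !decide (sizeLevel i t = 0))).map (polyLevel i)).map
              (fm (2*p+1) (MvPolynomial V S) q) := by
        rw [List.map_map]
        exact List.map_congr_left fun t _ => blk_prod p i q hq' t
      rw [hm1, fm_list_prod q hqw]
      congr 1
      rw [← prod_filter_split (fun t => decide (sizeLevel i t = 0)) (polyLevel i)
            (show List (Level V S i) from ts), zs_prod]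
    · -- addition gate
      have hpar2 : (i + 1) % 2 = 0 := by omega
      have hq2 : q + 2 < 2*p+1 := by omega
      have hq1 : q + 1 < 2*p+1 := by omega
      have hq' : (q+2) + i ≤ 2 * p + i % 2 := by omega
      simp only [blk, polyLevel, if_neg hpar]
      rw [List.prod_cons, List.prod_append, prod_flatMap]
      have hm1 : (((show List (Level V S i) from ts).filter
            (fun t => !decide (sizeLevel i t = 0))).map
              (fun t => (Emat (2*p+1) (MvPolynomial V S) q ::
                (blk (2*p+1) i (q+2) t ++ [Fmat (2*p+1) (MvPolynomial V S) q])).prod))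
          = (((show List (Level V S i) from ts).filter
            (fun t => !decide (sizeLevel i t = 0))).map (polyLevel i)).map
              (midm (2*p+1) (MvPolynomial V S) q) := by
        rw [List.map_map]
        refine List.map_congr_left fun t _ => ?_
        rw [List.prod_cons, List.prod_append, List.prod_singleton,
          blk_prod p i (q+2) hq' t, ← mul_assoc, E_fm_F q hq2]
        rfl
      rw [hm1]
      have htail : ([Emat (2*p+1) (MvPolynomial V S) q,
          fm (2*p+1) (MvPolynomial V S) (q + 2) (MvPolynomial.C
            ((((show List (Level V S i) from ts).filter
                (fun t => decide (sizeLevel i t = 0))).map (cst i)).sum)),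
          Fmat (2*p+1) (MvPolynomial V S) q,
          Zmat (2*p+1) (MvPolynomial V S) q]).prod
          = midm (2*p+1) (MvPolynomial V S) q (MvPolynomial.C
              ((((show List (Level V S i) from ts).filter
                  (fun t => decide (sizeLevel i t = 0))).map (cst i)).sum))
            * Zmat (2*p+1) (MvPolynomial V S) q := by
        simp only [List.prod_cons, List.prod_singleton, List.prod_nil, mul_one,
          ← mul_assoc]
        rw [E_fm_F q hq2]
      rw [htail]
      rw [show (Wmat (2*p+1) (MvPolynomial V S) q)
            = wmidm (2*p+1) (MvPolynomial V S) q 0 from rfl]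
      rw [← mul_assoc, ← mul_assoc, wmid_list_prod q hq1, wmid_mul_mid q hq1,
        wmid_mul_Z q hq1]
      rw [zero_add, ← sum_filter_split (fun t => decide (sizeLevel i t = 0)) (polyLevel i)
            (show List (Level V S i) from ts), zs_sum]
      exact congrArg _ (add_comm _ _)

lemma one_le_of_mem_filter {i : ℕ} {ts : List (Level V S i)} {t : Level V S i}
    (ht : t ∈ ts.filter (fun t => !decide (sizeLevel i t = 0))) :
    1 ≤ sizeLevel i t := by
  have := (List.mem_filter.mp ht).2
  simp at this
  omega

lemma blk_len (w : ℕ) : ∀ (i q : ℕ) (G : Level V S i),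
    (blk w i q G).length ≤ 5 + 8 * i * sizeLevel i G
  | 0, q, x => by simp [blk, sizeLevel]
  | i + 1, q, ts => by
    by_cases hpar : (i + 1) % 2 = 1
    · simp only [blk, if_pos hpar, sizeLevel, List.length_cons, List.length_flatMap,
        List.map_map]
      have h1 : (((ts : List (Level V S i)).filter
            (fun t => !decide (sizeLevel i t = 0))).map
              (List.length ∘ (fun t => blk w i q t))).sum
          ≤ (5 + 8 * i) * (((ts : List (Level V S i)).filter
            (fun t => !decide (sizeLevel i t = 0))).map (sizeLevel i)).sum := by
        refine sum_le_mul_sum _ _ _ _ fun t ht => ?_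
        have hs1 : 1 ≤ sizeLevel i t := one_le_of_mem_filter ht
        have h2 := blk_len w i q t
        have h3 : 5 * 1 ≤ 5 * sizeLevel i t := Nat.mul_le_mul_left 5 hs1
        simp only [Function.comp]
        calc (blk w i q t).length ≤ 5 + 8 * i * sizeLevel i t := h2
          _ ≤ 5 * sizeLevel i t + 8 * i * sizeLevel i t := by omega
          _ = (5 + 8 * i) * sizeLevel i t := by ring
      have h2 : (((ts : List (Level V S i)).filter
            (fun t => !decide (sizeLevel i t = 0))).map (sizeLevel i)).sum
          ≤ ((ts : List (Level V S i)).map (sizeLevel i)).sum :=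
        sum_filter_le _ _ _
      have h4 : (5 + 8 * i) * (((ts : List (Level V S i)).filter
            (fun t => !decide (sizeLevel i t = 0))).map (sizeLevel i)).sum
          ≤ (5 + 8 * i) * ((ts : List (Level V S i)).map (sizeLevel i)).sum :=
        Nat.mul_le_mul_left _ h2
      have h5 : (5 + 8 * i) * ((ts : List (Level V S i)).map (sizeLevel i)).sum
          ≤ (8 * (i + 1)) * ((ts : List (Level V S i)).map (sizeLevel i)).sum :=
        Nat.mul_le_mul_right _ (by omega)
      have h6 : (8 * (i + 1)) * ((ts : List (Level V S i)).map (sizeLevel i)).sum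
          = 8 * (i + 1) * ((ts : List (Level V S i)).map (sizeLevel i)).sum := rfl
      calc ((((ts : List (Level V S i)).filter
            (fun t => !decide (sizeLevel i t = 0))).map
              (List.length ∘ (fun t => blk w i q t))).sum) + 1
          ≤ (5 + 8 * i) * ((ts : List (Level V S i)).map (sizeLevel i)).sum + 1 :=
            by have := le_trans h1 h4; omega
        _ ≤ 8 * (i + 1) * ((ts : List (Level V S i)).map (sizeLevel i)).sum + 5 :=
            by have := h5; omega
        _ = 5 + 8 * (i + 1) * ((ts : List (Level V S i)).map (sizeLevel i)).sum :=
            by omega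
    · simp only [blk, if_neg hpar, sizeLevel, List.length_cons, List.length_append,
        List.length_flatMap, List.map_map]
      have h1 : (((ts : List (Level V S i)).filter
            (fun t => !decide (sizeLevel i t = 0))).map
              (List.length ∘ (fun t => Emat w (MvPolynomial V S) q ::
                (blk w i (q + 2) t ++ [Fmat w (MvPolynomial V S) q])))).sum
          ≤ (7 + 8 * i) * (((ts : List (Level V S i)).filter
            (fun t => !decide (sizeLevel i t = 0))).map (sizeLevel i)).sum := by
        refine sum_le_mul_sum _ _ _ _ fun t ht => ?_
        have hs1 : 1 ≤ sizeLevel i t := one_le_of_mem_filter ht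
        have h2 := blk_len w i (q + 2) t
        have h3 : 7 * 1 ≤ 7 * sizeLevel i t := Nat.mul_le_mul_left 7 hs1
        simp only [Function.comp, List.length_cons, List.length_append,
          List.length_singleton]
        calc (blk w i (q + 2) t).length + 1 + 1 ≤ 5 + 8 * i * sizeLevel i t + 2 := by omega
          _ ≤ 7 * sizeLevel i t + 8 * i * sizeLevel i t := by omega
          _ = (7 + 8 * i) * sizeLevel i t := by ring
      have h2 : (((ts : List (Level V S i)).filter
            (fun t => !decide (sizeLevel i t = 0))).map (sizeLevel i)).sum
          ≤ ((ts : List (Level V S i)).map (sizeLevel i)).sum :=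
        sum_filter_le _ _ _
      have h4 := le_trans h1 (Nat.mul_le_mul_left (7 + 8 * i) h2)
      have h5 : (7 + 8 * i) * ((ts : List (Level V S i)).map (sizeLevel i)).sum
          ≤ 8 * (i + 1) * ((ts : List (Level V S i)).map (sizeLevel i)).sum := by
        have : 7 + 8 * i ≤ 8 * (i + 1) := by omega
        exact Nat.mul_le_mul_right _ this
      simp only [List.length_cons, List.length_nil, List.length_append, Function.comp_def] at h4 ⊢
      omega

lemma blk_ok (w : ℕ) : ∀ (i q : ℕ) (G : Level V S i), ∀ A ∈ blk w i q G, OkM A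
  | 0, q, x => by
    intro A hA
    simp only [blk, List.mem_singleton] at hA
    subst hA
    refine okM_ds q q q _ ?_ (by omega)
    cases x with
    | inl v => exact Or.inl ⟨v, rfl⟩
    | inr c => exact Or.inr ⟨c, rfl⟩
  | i + 1, q, ts => by
    intro A hA
    have okE : OkM (Emat w (MvPolynomial V S) q) :=
      okM_ds (q+2) q (q+2) _ okP_one (by omega)
    have okF : OkM (Fmat w (MvPolynomial V S) q) :=
      okM_ds (q+2) (q+2) (q+1) _ okP_one (by omega)
    have okZ : OkM (Zmat w (MvPolynomial V S) q) :=
      okM_ds q (q+1) q _ okP_one (by omega)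
    have okW : OkM (Wmat w (MvPolynomial V S) q) :=
      okM_ds (q+1) q (q+1) _ okP_zero (by omega)
    have okfm : ∀ (q' : ℕ) (c : S), OkM (fm w (MvPolynomial V S) q' (MvPolynomial.C c)) :=
      fun q' c => okM_ds q' q' q' _ (Or.inr ⟨c, rfl⟩) (by omega)
    by_cases hpar : (i + 1) % 2 = 1
    · simp only [blk, if_pos hpar, List.mem_cons, List.mem_flatMap] at hA
      rcases hA with rfl | ⟨t, _ht, hAt⟩
      · exact okfm _ _
      · exact blk_ok w i q t A hAt
    · simp only [blk, if_neg hpar, List.mem_cons, List.mem_append, List.mem_flatMap] at hA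
      rcases hA with rfl | hA
      · exact okW
      rcases hA with ⟨t, _ht, hAt⟩ | hA
      · rcases hAt with rfl | hAt | rfl | h0
        · exact okE
        · exact blk_ok w i (q + 2) t A hAt
        · exact okF
        · exact absurd h0 List.not_mem_nil
      · rcases hA with rfl | rfl | rfl | rfl | h0
        · exact okE
        · exact okfm _ _
        · exact okF
        · exact okZ
        · exact absurd h0 List.not_mem_nil

lemma fm_zero_zero {w : ℕ} [NeZero w] (x : T) :
    fm w T 0 x 0 0 = x := by
  have h0 : ((0 : Fin w) : ℕ) = 0 := Fin.val_zero w
  simp [fm, diagm, sbm, Matrix.add_apply, Matrix.of_apply, h0]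

end St8



/-- Statement-8 over an arbitrary commutative semiring. -/
theorem stmt8_general {V S : Type} [CommSemiring S] (p : ℕ) (hp : 1 ≤ p)
    (F : Level V S (2 * p)) (hs : 1 ≤ sizeLevel (2 * p) F) :
    ∃ L : ℕ, L ≤ 21 * p * sizeLevel (2 * p) F ∧
      ∃ M : Fin L → Matrix (Fin (2 * p + 1)) (Fin (2 * p + 1)) (MvPolynomial V S),
        IsABP M ∧ ∀ a : V → S, ABPeval M a = evalLevel a (2 * p) F := by
  classical
  refine ⟨(St8.blk (2*p+1) (2*p) 0 F).length, ?_, fun i => (St8.blk (2*p+1) (2*p) 0 F).get i,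
    ?_, ?_⟩
  · have h1 := St8.blk_len (2*p+1) (2*p) 0 F
    have h2 : 1 * 1 ≤ p * sizeLevel (2*p) F := Nat.mul_le_mul hp hs
    have h3 : 8 * (2*p) * sizeLevel (2*p) F = 16 * (p * sizeLevel (2*p) F) := by ring
    have h4 : 21 * p * sizeLevel (2*p) F = 21 * (p * sizeLevel (2*p) F) := by ring
    omega
  · intro l i j
    exact St8.blk_ok (2*p+1) (2*p) 0 F _ (List.get_mem _ l) i j
  · intro a
    have hprod := St8.blk_prod (V := V) (S := S) p (2*p) 0 (by omega) F
    show MvPolynomial.eval a ((List.ofFn fun i => (St8.blk (2*p+1) (2*p) 0 F).get i).prod 0 0)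
        = _
    rw [List.ofFn_get, hprod, St8.fm_zero_zero, St8.eval_polyLevel]


/-- low-depth formulas to low-width ABPs: there is a universal
constant `C` such that, over `S = 𝖱` and over `S = 𝖱⁺`, for every `p ≥ 1` and
every depth-`2p` alternating `⊕⊗…⊕⊗` min-plus formula `F` of size `s ≥ 1`,
there is a weakest width-`(2p+1)` ABP of length at most `C · p · s` computing
the same function. -/
theorem stmt8 : ∃ C : ℕ,
    (∀ (V : Type) (p : ℕ), 1 ≤ p → ∀ F : Level V TR (2 * p),
      1 ≤ sizeLevel (2 * p) F →
      ∃ L : ℕ, L ≤ C * p * sizeLevel (2 * p) F ∧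
        ∃ M : Fin L → Matrix (Fin (2 * p + 1)) (Fin (2 * p + 1)) (MvPolynomial V TR),
          IsABP M ∧ ∀ a : V → TR, ABPeval M a = evalLevel a (2 * p) F) ∧
    (∀ (V : Type) (p : ℕ), 1 ≤ p → ∀ F : Level V TRP (2 * p),
      1 ≤ sizeLevel (2 * p) F →
      ∃ L : ℕ, L ≤ C * p * sizeLevel (2 * p) F ∧
        ∃ M : Fin L → Matrix (Fin (2 * p + 1)) (Fin (2 * p + 1)) (MvPolynomial V TRP),
          IsABP M ∧ ∀ a : V → TRP, ABPeval M a = evalLevel a (2 * p) F) := by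
  
  refine ⟨21, ?_, ?_⟩
  · intro V p hp F hs
    exact stmt8_general p hp F hs
  · intro V p hp F hs
    exact stmt8_general p hp F hs
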